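/- Let w be a right-infinite word over a finite alphabet. For every n ≥ 0, dim(W_{n+1}) ≥ dim(V_n) − 1, where V_n is the span of length-n factors in the factor algebra over ℚ and W_{n+1} is the span of commutators ab − ba with a, b ∈ Fac(w), |a| + |b| = n+1. -/

import Mathlib

variable {α : Type*}

/-- `u` occurs in the infinite word `w` at position `i`. -/
def FactorAt (w : ℕ → α) (i : ℕ) (u : List α) : Prop :=
  u = (List.range u.length).map fun k => w (i + k)

/-- The set of (finite) factors of the right-infinite word `w`. -/
def Fac (w : ℕ → α) : Set (List α) := {u | ∃ i, FactorAt w i u}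

/-- The relation defining the factor algebra: words that are not factors of `w`
are set to zero in the monoid algebra `ℚ⟨Σ*⟩`. -/
def FacAlgRel (w : ℕ → α) :
    MonoidAlgebra ℚ (FreeMonoid α) → MonoidAlgebra ℚ (FreeMonoid α) → Prop :=
  fun x y => ∃ u : FreeMonoid α, FreeMonoid.toList u ∉ Fac w ∧
    x = MonoidAlgebra.of ℚ (FreeMonoid α) u ∧ y = 0

/-- The factor algebra `A_w` of `w` over `ℚ`. -/
abbrev FacAlg (w : ℕ → α) := RingQuot (FacAlgRel w)

/-- The image in the factor algebra of a word `u`. -/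
noncomputable def facCls (w : ℕ → α) (u : List α) : FacAlg w :=
  RingQuot.mkAlgHom ℚ (FacAlgRel w) (MonoidAlgebra.of ℚ (FreeMonoid α) (FreeMonoid.ofList u))

/-- `V_n`: the span of the images of length-`n` factors of `w`. -/
noncomputable def Vspace (w : ℕ → α) (n : ℕ) : Submodule ℚ (FacAlg w) :=
  Submodule.span ℚ {x | ∃ u ∈ Fac w, u.length = n ∧ x = facCls w u}

/-- `W_n`: the span of commutators `ab - ba` with `a, b` factors of `w` and `|a|+|b| = n`. -/
noncomputable def Wspace (w : ℕ → α) (n : ℕ) : Submodule ℚ (FacAlg w) :=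
  Submodule.span ℚ {x | ∃ a ∈ Fac w, ∃ b ∈ Fac w, a.length + b.length = n ∧
    x = facCls w a * facCls w b - facCls w b * facCls w a}

namespace FacProof

variable (w : ℕ → α)

/-- The segment of `w` of length `n` starting at position `i`. -/
def seg (i n : ℕ) : List α := (List.range n).map fun k => w (i + k)

@[simp] lemma seg_length (i n : ℕ) : (seg w i n).length = n := by simp [seg]

lemma factorAt_iff (i : ℕ) (u : List α) : FactorAt w i u ↔ u = seg w i u.length := Iff.rfl

lemma seg_factorAt (i n : ℕ) : FactorAt w i (seg w i n) := by
  rw [factorAt_iff, seg_length]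

lemma seg_mem_Fac (i n : ℕ) : seg w i n ∈ Fac w := ⟨i, seg_factorAt w i n⟩

lemma seg_add (i m n : ℕ) : seg w i (m + n) = seg w i m ++ seg w (i + m) n := by
  simp [seg, List.range_add, Nat.add_assoc, Function.comp_def]

lemma seg_one (i : ℕ) : seg w i 1 = [w i] := by
  simp [seg, List.range_succ]

lemma seg_succ (i n : ℕ) : seg w i (n + 1) = seg w i n ++ [w (i + n)] := by
  rw [seg_add, seg_one]

lemma seg_cons (i n : ℕ) : seg w i (n + 1) = w i :: seg w (i + 1) n := by
  have h := seg_add w i 1 n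
  rw [Nat.add_comm 1 n] at h
  rw [h, seg_one]
  rfl

lemma factorAt_append {i : ℕ} {a b : List α} (h : FactorAt w i (a ++ b)) :
    FactorAt w i a ∧ FactorAt w (i + a.length) b := by
  rw [factorAt_iff, List.length_append, seg_add] at h
  have h1 := List.append_inj h (by simp)
  exact ⟨h1.1, h1.2⟩

lemma Fac_append {a b : List α} (h : a ++ b ∈ Fac w) : a ∈ Fac w ∧ b ∈ Fac w := by
  obtain ⟨i, hi⟩ := h
  obtain ⟨h1, h2⟩ := factorAt_append w hi
  exact ⟨⟨i, h1⟩, ⟨_, h2⟩⟩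

/-- The first occurrence of a word in `w`. -/
noncomputable def fo (u : List α) : ℕ := sInf {i | FactorAt w i u}

lemma fo_factorAt {u : List α} (h : u ∈ Fac w) : FactorAt w (fo w u) u := Nat.sInf_mem h

lemma fo_le {u : List α} {i : ℕ} (h : FactorAt w i u) : fo w u ≤ i := Nat.sInf_le h

lemma eq_seg_fo {u : List α} {n : ℕ} (h : u ∈ Fac w) (hn : u.length = n) :
    u = seg w (fo w u) n := by
  have := fo_factorAt w h
  rw [factorAt_iff, hn] at this
  exact this

/-- The span of monomials corresponding to non-factors: the "defining ideal" as a submodule. -/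
noncomputable def NF : Submodule ℚ (MonoidAlgebra ℚ (FreeMonoid α)) :=
  Submodule.span ℚ {x | ∃ u : FreeMonoid α, FreeMonoid.toList u ∉ Fac w ∧
    x = MonoidAlgebra.of ℚ (FreeMonoid α) u}

lemma of_mul_mem_NF {u : FreeMonoid α} (hu : FreeMonoid.toList u ∉ Fac w)
    (y : MonoidAlgebra ℚ (FreeMonoid α)) :
    MonoidAlgebra.of ℚ (FreeMonoid α) u * y ∈ NF w ∧
      y * MonoidAlgebra.of ℚ (FreeMonoid α) u ∈ NF w := by
  induction y using MonoidAlgebra.induction_on with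
  | of m =>
    constructor
    · refine Submodule.subset_span ⟨u * m, ?_, (map_mul _ _ _).symm⟩
      intro hc
      rw [FreeMonoid.toList_mul] at hc
      exact hu (Fac_append w hc).1
    · refine Submodule.subset_span ⟨m * u, ?_, (map_mul _ _ _).symm⟩
      intro hc
      rw [FreeMonoid.toList_mul] at hc
      exact hu (Fac_append w hc).2
  | add f g hf hg =>
    exact ⟨by rw [mul_add]; exact add_mem hf.1 hg.1,
      by rw [add_mul]; exact add_mem hf.2 hg.2⟩
  | smul r f hf =>
    exact ⟨by rw [mul_smul_comm]; exact Submodule.smul_mem _ _ hf.1,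
      by rw [smul_mul_assoc]; exact Submodule.smul_mem _ _ hf.2⟩

lemma NF_mul_right {x : MonoidAlgebra ℚ (FreeMonoid α)} (hx : x ∈ NF w)
    (y : MonoidAlgebra ℚ (FreeMonoid α)) : x * y ∈ NF w := by
  induction hx using Submodule.span_induction with
  | mem x hx => obtain ⟨u, hu, rfl⟩ := hx; exact (of_mul_mem_NF w hu y).1
  | zero => simp [Submodule.zero_mem]
  | add a b _ _ ha hb => rw [add_mul]; exact add_mem ha hb
  | smul r a _ ha => rw [smul_mul_assoc]; exact Submodule.smul_mem _ _ ha

lemma NF_mul_left {x : MonoidAlgebra ℚ (FreeMonoid α)} (hx : x ∈ NF w)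
    (y : MonoidAlgebra ℚ (FreeMonoid α)) : y * x ∈ NF w := by
  induction hx using Submodule.span_induction with
  | mem x hx => obtain ⟨u, hu, rfl⟩ := hx; exact (of_mul_mem_NF w hu y).2
  | zero => simp [Submodule.zero_mem]
  | add a b _ _ ha hb => rw [mul_add]; exact add_mem ha hb
  | smul r a _ ha => rw [mul_smul_comm]; exact Submodule.smul_mem _ _ ha

lemma rel_sub_mem {a b : MonoidAlgebra ℚ (FreeMonoid α)}
    (h : RingQuot.Rel (FacAlgRel w) a b) : a - b ∈ NF w := by
  induction h with
  | of h =>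
    obtain ⟨u, hu, rfl, rfl⟩ := h
    have hmem : MonoidAlgebra.of ℚ (FreeMonoid α) u ∈
        {x | ∃ u : FreeMonoid α, FreeMonoid.toList u ∉ Fac w ∧
          x = MonoidAlgebra.of ℚ (FreeMonoid α) u} := ⟨u, hu, rfl⟩
    rw [sub_zero]; exact Submodule.subset_span hmem
  | add_left _ ih => simpa [add_sub_add_right_eq_sub] using ih
  | mul_left _ ih => rw [← sub_mul]; exact NF_mul_right w ih _
  | mul_right _ ih => rw [← mul_sub]; exact NF_mul_left w ih _

/-- A linear functional on the monoid algebra from a function on words. -/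
noncomputable def Gfun (g : List α → ℚ) : MonoidAlgebra ℚ (FreeMonoid α) →ₗ[ℚ] ℚ :=
  Finsupp.linearCombination ℚ (fun m : FreeMonoid α => g (FreeMonoid.toList m)) ∘ₗ
    (MonoidAlgebra.coeffLinearEquiv ℚ).toLinearMap

lemma Gfun_of (g : List α → ℚ) (m : FreeMonoid α) :
    Gfun g (MonoidAlgebra.of ℚ (FreeMonoid α) m) = g (FreeMonoid.toList m) := by
  have h := Finsupp.linearCombination_single (M := ℚ) ℚ
    (v := fun m : FreeMonoid α => g (FreeMonoid.toList m)) (1 : ℚ) m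
  rw [one_smul] at h
  simp only [Gfun, MonoidAlgebra.of_apply, LinearMap.coe_comp, Function.comp_apply,
    LinearEquiv.coe_coe]
  exact h

lemma Gfun_NF {g : List α → ℚ} (hg : ∀ u ∉ Fac w, g u = 0)
    {x : MonoidAlgebra ℚ (FreeMonoid α)} (hx : x ∈ NF w) : Gfun g x = 0 := by
  induction hx using Submodule.span_induction with
  | mem x hx =>
    obtain ⟨u, hu, rfl⟩ := hx
    rw [Gfun_of]
    exact hg _ hu
  | zero => simp
  | add a b _ _ ha hb => rw [map_add, ha, hb, add_zero]
  | smul r a _ ha => rw [map_smul, ha, smul_zero]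

/-- The induced linear functional on the factor algebra. -/
noncomputable def Gq (g : List α → ℚ) (hg : ∀ u ∉ Fac w, g u = 0) :
    FacAlg w →ₗ[ℚ] ℚ where
  toFun x := Quot.lift (⇑(Gfun g))
    (fun a b h => by
      have h2 := Gfun_NF w hg (rel_sub_mem w h)
      rwa [map_sub, sub_eq_zero] at h2) x.toQuot
  map_add' := by
    rintro ⟨⟨x⟩⟩ ⟨⟨y⟩⟩
    rw [RingQuot.add_quot]
    exact map_add (Gfun g) x y
  map_smul' := by
    rintro r ⟨⟨x⟩⟩
    rw [RingQuot.smul_quot]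
    exact map_smul (Gfun g) r x

lemma Gq_facCls (g : List α → ℚ) (hg : ∀ u ∉ Fac w, g u = 0) (u : List α) :
    Gq w g hg (facCls w u) = g u := by
  have h1 : facCls w u = RingQuot.mkRingHom (FacAlgRel w)
      (MonoidAlgebra.of ℚ (FreeMonoid α) (FreeMonoid.ofList u)) := by
    rw [facCls, ← RingQuot.mkAlgHom_coe ℚ]
    rfl
  have hmk : facCls w u =
      ⟨Quot.mk _ (MonoidAlgebra.of ℚ (FreeMonoid α) (FreeMonoid.ofList u))⟩ := by
    rw [h1, RingQuot.mkRingHom_def]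
    rfl
  rw [hmk]
  show Gfun g (MonoidAlgebra.of ℚ (FreeMonoid α) (FreeMonoid.ofList u)) = g u
  rw [Gfun_of, FreeMonoid.toList_ofList]

lemma facCls_mul (a b : List α) : facCls w a * facCls w b = facCls w (a ++ b) := by
  rw [facCls, facCls, facCls, ← map_mul, ← map_mul, ← FreeMonoid.ofList_append]

end FacProof

open FacProof in
theorem dim_W_succ_ge [Fintype α] (w : ℕ → α) (n : ℕ) :
    Module.finrank ℚ (Vspace w n) - 1 ≤ Module.finrank ℚ (Wspace w (n + 1)) := by
  classical
  -- the finite set of length-`n` factors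
  have hFn : {u : List α | u ∈ Fac w ∧ u.length = n}.Finite :=
    (List.finite_length_le α n).subset (fun u hu => le_of_eq hu.2)
  set F : Finset (List α) := hFn.toFinset with hF
  have hmemF : ∀ u : List α, u ∈ F ↔ u ∈ Fac w ∧ u.length = n := by
    intro u; simp [hF, Set.Finite.mem_toFinset]
  -- upper bound for `finrank V`
  have hV : Module.finrank ℚ (Vspace w n) ≤ F.card := by
    have himg : {x | ∃ u ∈ Fac w, u.length = n ∧ x = facCls w u} =
        ↑(F.image (facCls w)) := by
      ext x
      simp only [Finset.coe_image, Set.mem_image, Set.mem_setOf_eq, Finset.mem_coe, hmemF]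
      constructor
      · rintro ⟨u, hu, hlen, rfl⟩; exact ⟨u, ⟨hu, hlen⟩, rfl⟩
      · rintro ⟨u, ⟨hu, hlen⟩, rfl⟩; exact ⟨u, hu, hlen, rfl⟩
    rw [Vspace, himg]
    exact le_trans (finrank_span_finset_le_card _) (Finset.card_image_le)
  -- `W` is finite dimensional
  have hWfin : (Wspace w (n + 1)).FG := by
    apply Submodule.fg_span
    have : {x | ∃ a ∈ Fac w, ∃ b ∈ Fac w, a.length + b.length = n + 1 ∧
        x = facCls w a * facCls w b - facCls w b * facCls w a} ⊆
        (fun p : List α × List α =>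
          facCls w p.1 * facCls w p.2 - facCls w p.2 * facCls w p.1) ''
          ({l | l.length ≤ n + 1} ×ˢ {l | l.length ≤ n + 1}) := by
      rintro x ⟨a, _, b, _, hab, rfl⟩
      exact ⟨(a, b), ⟨show a.length ≤ n + 1 by omega, show b.length ≤ n + 1 by omega⟩, rfl⟩
    exact Set.Finite.subset
      (((List.finite_length_le α (n + 1)).prod (List.finite_length_le α (n + 1))).image _) this
  haveI : Module.Finite ℚ (Wspace w (n + 1)) := Module.Finite.iff_fg.mpr hWfin
  -- the index set: length-`n` factors whose first occurrence is positive
  set F0 : Finset (List α) := F.filter (fun u => fo w u ≠ 0) with hF0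
  -- `F0.card = F.card - 1`
  have hcard : F0.card = F.card - 1 := by
    have h1 : (F.filter (fun u => fo w u = 0)) = {seg w 0 n} := by
      ext u
      simp only [Finset.mem_filter, Finset.mem_singleton, hmemF]
      constructor
      · rintro ⟨⟨hu, hlen⟩, hfo⟩
        have := eq_seg_fo w hu hlen
        rwa [hfo] at this
      · rintro rfl
        refine ⟨⟨seg_mem_Fac w 0 n, seg_length w 0 n⟩, ?_⟩
        exact Nat.le_zero.mp (fo_le w (seg_factorAt w 0 n))
    have h2 := Finset.card_filter_add_card_filter_not
      (s := F) (fun u => fo w u = 0)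
    rw [h1, Finset.card_singleton] at h2
    have h3 : (F.filter (fun u => ¬ fo w u = 0)).card = F0.card := by
      rw [hF0]
    omega
  -- the commutator family
  set c : List α → FacAlg w := fun u =>
    facCls w (seg w (fo w u - 1) n) * facCls w [w (fo w u - 1 + n)] -
      facCls w [w (fo w u - 1 + n)] * facCls w (seg w (fo w u - 1) n) with hc
  have hcW : ∀ u ∈ F0, c u ∈ Wspace w (n + 1) := by
    intro u hu
    refine Submodule.subset_span ⟨seg w (fo w u - 1) n, seg_mem_Fac w _ _,
      [w (fo w u - 1 + n)], ?_, by simp, rfl⟩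
    have : [w (fo w u - 1 + n)] = seg w (fo w u - 1 + n) 1 := (seg_one w _).symm
    rw [this]; exact seg_mem_Fac w _ _
  -- linear independence of the commutator family
  have hli : LinearIndependent ℚ (fun u : {x // x ∈ F0} =>
      (⟨c ↑u, hcW ↑u u.2⟩ : Wspace w (n + 1))) := by
    apply LinearIndependent.of_comp (Wspace w (n + 1)).subtype
    rw [Fintype.linearIndependent_iff]
    intro g hsum
    by_contra hne
    push_neg at hne
    obtain ⟨i₀, hi₀⟩ := hne
    -- choose the support element with maximal first occurrence
    have hsne : (Finset.univ.filter (fun i : {x // x ∈ F0} => g i ≠ 0)).Nonempty :=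
      ⟨i₀, by simp [hi₀]⟩
    obtain ⟨u₀, hu₀mem, hu₀max⟩ := Finset.exists_max_image
      (Finset.univ.filter (fun i : {x // x ∈ F0} => g i ≠ 0))
      (fun i => fo w (↑i : List α)) hsne
    have hgu₀ : g u₀ ≠ 0 := (Finset.mem_filter.mp hu₀mem).2
    -- the detecting functional
    set gt : List α → ℚ :=
      Set.indicator {v : List α | v ∈ Fac w ∧ v.tail = (↑u₀ : List α) ∧ v ≠ []}
        (fun _ => (1 : ℚ)) with hgt
    have hgt0 : ∀ u ∉ Fac w, gt u = 0 := by
      intro u hu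
      exact Set.indicator_of_notMem (fun hmem => hu hmem.1) _
    set φ := Gq w gt hgt0 with hφ
    -- facts about elements of F0
    have key : ∀ i : {x // x ∈ F0}, g i ≠ 0 →
        φ (c ↑i) = if i = u₀ then 1 else 0 := by
      intro i hgi
      have hmem2 := i.2
      simp only [hF0, Finset.mem_filter, hmemF] at hmem2
      obtain ⟨⟨hiF, hilen⟩, hifo⟩ := hmem2
      set j := fo w (↑i : List α) with hj
      have hj1 : j - 1 + 1 = j := by omega
      set A := seg w (j - 1) n with hA
      set y := w (j - 1 + n) with hy
      -- the two words
      have hAy : A ++ [y] = seg w (j - 1) (n + 1) := (seg_succ w _ _).symm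
      have hyA : [y] ++ A = y :: A := rfl
      have hi_seg : (↑i : List α) = seg w j n := eq_seg_fo w hiF hilen
      have htail : (A ++ [y]).tail = (↑i : List α) := by
        rw [hAy, seg_cons, hj1, ← hi_seg]
        rfl
      -- evaluate the functional on the commutator
      have hcomp : φ (c ↑i) = gt (A ++ [y]) - gt (y :: A) := by
        rw [hc]
        simp only [← hA, ← hy]
        rw [facCls_mul, facCls_mul, map_sub, hφ, Gq_facCls, Gq_facCls, hyA]
      -- first term
      have hterm1 : gt (A ++ [y]) = if i = u₀ then 1 else 0 := by
        by_cases h : i = u₀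
        · subst h
          rw [hgt]
          have hmem3 : (A ++ [y]) ∈
              {v : List α | v ∈ Fac w ∧ v.tail = (↑i : List α) ∧ v ≠ []} := by
            refine ⟨?_, htail, by simp⟩
            rw [hAy]; exact seg_mem_Fac w _ _
          rw [Set.indicator_of_mem hmem3]
          simp
        · rw [hgt, Set.indicator_of_notMem, if_neg h]
          rintro ⟨-, htl, -⟩
          exact h (Subtype.ext (by rw [← htail, htl]))
      -- second term: vanishes by maximality of `fo u₀`
      have hterm2 : gt (y :: A) = 0 := by
        rw [hgt]
        apply Set.indicator_of_notMem
        rintro ⟨-, htl, -⟩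
        have hAu₀ : A = (↑u₀ : List α) := by simpa using htl
        have hfoA : fo w A ≤ j - 1 := fo_le w (seg_factorAt w (j - 1) n)
        have hmax : fo w (↑i : List α) ≤ fo w (↑u₀ : List α) :=
          hu₀max i (by simp [hgi])
        rw [← hAu₀] at hmax
        omega
      rw [hcomp, hterm1, hterm2, sub_zero]
    -- apply the functional to the sum
    have hzero : φ (∑ i, g i • ((Wspace w (n + 1)).subtype ∘ fun u : {x // x ∈ F0} =>
        (⟨c ↑u, hcW ↑u u.2⟩ : Wspace w (n + 1))) i) = 0 := by
      rw [hsum, map_zero]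
    rw [map_sum] at hzero
    simp only [Function.comp_apply, Submodule.coe_subtype, map_smul] at hzero
    have heval : ∀ i : {x // x ∈ F0},
        g i • φ (c ↑i) = if i = u₀ then g i else 0 := by
      intro i
      by_cases hgi : g i = 0
      · simp [hgi]
      · rw [key i hgi]
        by_cases h : i = u₀ <;> simp [h]
    rw [Finset.sum_congr rfl (fun i _ => heval i)] at hzero
    rw [Finset.sum_ite_eq' Finset.univ u₀ g] at hzero
    simp at hzero
    exact hgu₀ hzero
  have hW : F0.card ≤ Module.finrank ℚ (Wspace w (n + 1)) := by
    have := hli.fintype_card_le_finrank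
    simpa [Fintype.card_coe] using this
  omega
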